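/- Let F : ℝⁿ ⇒ ℝᵐ be a polyhedral set-valued mapping with closed graph (i.e., the graph is a finite union of convex polyhedral sets). Then there exists K > 0 such that for every (x̄, ȳ) ∈ graph F there is ε > 0 with d(x, F⁻¹(ȳ)) ≤ K d(ȳ, F(x)) whenever ‖x − x̄‖ < Kε. In particular, F is metrically subregular at every point of its graph with a uniform modulus. -/

import Mathlib

open EMetric ENNReal

open scoped RealInnerProductSpace

section Aux

variable {E : Type*} [NormedAddCommGroup E] [InnerProductSpace ℝ E]
variable {ι : Type} [Fintype ι]

/-- Conic Carathéodory: a nonneg combination over `s` can be rewritten as a nonneg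
combination over a subset `t ⊆ s` on which the vectors are linearly independent. -/
lemma cone_caratheodory (a : ι → E) : ∀ (k : ℕ) (s : Finset ι), s.card ≤ k →
    ∀ (lam : ι → ℝ), (∀ i, 0 ≤ lam i) →
    ∃ t : Finset ι, t ⊆ s ∧ ∃ μ : ι → ℝ, LinearIndependent ℝ (fun i : t => a i) ∧
      (∀ i, 0 ≤ μ i) ∧ ∑ i ∈ t, μ i • a i = ∑ i ∈ s, lam i • a i := by
  classical
  intro k
  induction k with
  | zero =>
    intro s hcard lam hlam
    have hs : s = ∅ := Finset.card_eq_zero.1 (Nat.le_zero.1 hcard)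
    subst hs
    exact ⟨∅, subset_rfl, 0, linearIndependent_empty_type, fun i => le_rfl, rfl⟩
  | succ k ih =>
    intro s hcard lam hlam
    by_cases hLI : LinearIndependent ℝ (fun i : s => a i)
    · exact ⟨s, subset_rfl, lam, hLI, hlam, rfl⟩
    · obtain ⟨g, hgsum, j, hgj⟩ := Fintype.not_linearIndependent_iff.1 hLI
      -- get a relation with a positive coefficient
      obtain ⟨gg, hsum0, j0, hj0s, hj0pos⟩ :
          ∃ gg : ι → ℝ, (∑ i ∈ s, gg i • a i = 0) ∧ ∃ j0 ∈ s, 0 < gg j0 := by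
        rcases lt_or_gt_of_ne hgj with hneg | hpos
        · refine ⟨fun i => if h : i ∈ s then -g ⟨i, h⟩ else 0, ?_, j, j.2, ?_⟩
          · rw [← Finset.sum_coe_sort s (fun i => (if h : i ∈ s then -g ⟨i, h⟩ else 0) • a i)]
            simp only [Subtype.coe_prop, dif_pos, Finset.coe_mem]
            rw [← neg_eq_zero, ← Finset.sum_neg_distrib]
            simpa [neg_smul] using hgsum
          · simp only [j.2, dif_pos]
            simpa using neg_pos.2 hneg
        · refine ⟨fun i => if h : i ∈ s then g ⟨i, h⟩ else 0, ?_, j, j.2, ?_⟩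
          · rw [← Finset.sum_coe_sort s (fun i => (if h : i ∈ s then g ⟨i, h⟩ else 0) • a i)]
            simp only [Subtype.coe_prop, dif_pos, Finset.coe_mem]
            simpa using hgsum
          · simp only [j.2, dif_pos]
            simpa using hpos
      -- minimizing ratio
      set Ps : Finset ι := s.filter (fun i => 0 < gg i) with hPs
      have hPne : Ps.Nonempty := ⟨j0, Finset.mem_filter.2 ⟨hj0s, hj0pos⟩⟩
      set θ : ℝ := Ps.inf' hPne (fun i => lam i / gg i) with hθ
      obtain ⟨i0, hi0P, hi0θ⟩ := Finset.exists_mem_eq_inf' hPne (fun i => lam i / gg i)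
      have hi0s : i0 ∈ s := (Finset.mem_filter.1 hi0P).1
      have hggi0 : 0 < gg i0 := (Finset.mem_filter.1 hi0P).2
      have hθ0 : 0 ≤ θ := by
        rw [hθ, hi0θ]; exact div_nonneg (hlam i0) hggi0.le
      set lam' : ι → ℝ := fun i => if i ∈ s then lam i - θ * gg i else 0 with hlam'def
      have hlam'0 : ∀ i, 0 ≤ lam' i := by
        intro i
        simp only [hlam'def]
        split_ifs with hi
        · rcases le_or_gt (gg i) 0 with hgi | hgi
          · have : θ * gg i ≤ 0 := mul_nonpos_iff.2 (Or.inl ⟨hθ0, hgi⟩)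
            linarith [hlam i]
          · have hiP : i ∈ Ps := Finset.mem_filter.2 ⟨hi, hgi⟩
            have := Finset.inf'_le (fun i => lam i / gg i) hiP
            rw [← hθ] at this
            have := (le_div_iff₀ hgi).1 this
            linarith
        · exact le_rfl
      have hlam'i0 : lam' i0 = 0 := by
        have : θ = lam i0 / gg i0 := by rw [hθ, hi0θ]
        simp only [hlam'def, if_pos hi0s, this]
        field_simp
        ring
      have hsum' : ∑ i ∈ s, lam' i • a i = ∑ i ∈ s, lam i • a i := by
        have h1 : ∑ i ∈ s, lam' i • a i
            = ∑ i ∈ s, (lam i • a i - θ • (gg i • a i)) := by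
          refine Finset.sum_congr rfl fun i hi => ?_
          simp [hlam'def, if_pos hi, sub_smul, smul_smul]
        rw [h1, Finset.sum_sub_distrib, ← Finset.smul_sum, hsum0, smul_zero, sub_zero]
      have hcard' : (s.erase i0).card ≤ k := by
        have := Finset.card_erase_of_mem hi0s
        omega
      obtain ⟨t, hts, μ, hLIt, hμ0, hμsum⟩ := ih (s.erase i0) hcard' lam' hlam'0
      refine ⟨t, hts.trans (Finset.erase_subset _ _), μ, hLIt, hμ0, ?_⟩
      rw [hμsum, ← hsum']
      rw [← Finset.add_sum_erase s (fun i => lam' i • a i) hi0s, hlam'i0, zero_smul, zero_add]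

/-- Uniform bound on coefficients of nonneg combinations over linearly independent subsets. -/
lemma cone_bound (a : ι → E) :
    ∃ C : ℝ, 0 < C ∧ ∀ t : Finset ι, LinearIndependent ℝ (fun i : t => a i) →
      ∀ μ : ι → ℝ, (∀ i, 0 ≤ μ i) → ∑ i ∈ t, μ i ≤ C * ‖∑ i ∈ t, μ i • a i‖ := by
  classical
  have hex : ∀ t : Finset ι, ∃ Ct : ℝ, 0 ≤ Ct ∧
      (LinearIndependent ℝ (fun i : t => a i) →
        ∀ μ : ι → ℝ, (∀ i, 0 ≤ μ i) → ∑ i ∈ t, μ i ≤ Ct * ‖∑ i ∈ t, μ i • a i‖) := by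
    intro t
    by_cases hLI : LinearIndependent ℝ (fun i : t => a i)
    · -- build the linear map
      let T : ((i : t) → ℝ) →ₗ[ℝ] E :=
        { toFun := fun ν => ∑ i : t, ν i • a i
          map_add' := by intro ν₁ ν₂; simp [add_smul, Finset.sum_add_distrib]
          map_smul' := by intro c ν; simp [smul_smul, Finset.smul_sum] }
      have hker : LinearMap.ker T = ⊥ := by
        rw [LinearMap.ker_eq_bot']
        intro ν hν
        funext i
        exact Fintype.linearIndependent_iff.1 hLI ν hν i
      obtain ⟨Kt, hKt0, hAL⟩ := T.exists_antilipschitzWith hker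
      refine ⟨(t.card : ℝ) * Kt, by positivity, fun _ μ hμ0 => ?_⟩
      set ν : (i : t) → ℝ := fun i => μ i with hν
      have hTν : T ν = ∑ i ∈ t, μ i • a i := Finset.sum_coe_sort t (fun i => μ i • a i)
      have hνnorm : ‖ν‖ ≤ (Kt : ℝ) * ‖T ν‖ := by
        have := hAL.le_mul_dist ν 0
        simpa [dist_zero_right, map_zero] using this
      have h2 : ∑ i ∈ t, μ i ≤ (t.card : ℝ) * ‖ν‖ := by
        rw [← Finset.sum_coe_sort t μ]
        calc ∑ i : t, μ (i : ι) ≤ ∑ _i : t, ‖ν‖ := by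
              refine Finset.sum_le_sum fun i _ => ?_
              exact (le_abs_self _).trans ((Real.norm_eq_abs _ ▸ norm_le_pi_norm ν i : |ν i| ≤ ‖ν‖))
          _ = (t.card : ℝ) * ‖ν‖ := by
              simp [Finset.sum_const, Finset.card_univ, nsmul_eq_mul]
      calc ∑ i ∈ t, μ i ≤ (t.card : ℝ) * ‖ν‖ := h2
        _ ≤ (t.card : ℝ) * ((Kt : ℝ) * ‖T ν‖) :=
            mul_le_mul_of_nonneg_left hνnorm (by positivity)
        _ = (t.card : ℝ) * Kt * ‖∑ i ∈ t, μ i • a i‖ := by rw [hTν]; ring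
    · exact ⟨0, le_rfl, fun h => absurd h hLI⟩
  choose Ct hCt0 hCt using hex
  have hsumpos : 0 ≤ ∑ t : Finset ι, Ct t := Finset.sum_nonneg fun u _ => hCt0 u
  refine ⟨1 + ∑ t : Finset ι, Ct t, by linarith, ?_⟩
  intro t hLI μ hμ0
  have h1 : Ct t ≤ 1 + ∑ t : Finset ι, Ct t := by
    have := Finset.single_le_sum (f := Ct) (fun u _ => hCt0 u) (Finset.mem_univ t)
    linarith
  calc ∑ i ∈ t, μ i ≤ Ct t * ‖∑ i ∈ t, μ i • a i‖ := hCt t hLI μ hμ0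
    _ ≤ (1 + ∑ t : Finset ι, Ct t) * ‖∑ i ∈ t, μ i • a i‖ :=
        mul_le_mul_of_nonneg_right h1 (norm_nonneg _)

/-- The finitely generated cone on active indices is closed. -/
lemma cone_isClosed [FiniteDimensional ℝ E] (a : ι → E) (A : Finset ι) :
    IsClosed {w : E | ∃ μ : ι → ℝ, (∀ i, 0 ≤ μ i) ∧ w = ∑ i ∈ A, μ i • a i} := by
  classical
  have hrw : {w : E | ∃ μ : ι → ℝ, (∀ i, 0 ≤ μ i) ∧ w = ∑ i ∈ A, μ i • a i}
      = ⋃ t ∈ {t : Finset ι | t ⊆ A ∧ LinearIndependent ℝ (fun i : t => a i)},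
        {w : E | ∃ μ : ι → ℝ, (∀ i, 0 ≤ μ i) ∧ w = ∑ i ∈ t, μ i • a i} := by
    ext w
    simp only [Set.mem_setOf_eq, Set.mem_iUnion]
    constructor
    · rintro ⟨μ, hμ0, rfl⟩
      obtain ⟨t, htA, ν, hLI, hν0, hνsum⟩ := cone_caratheodory a A.card A le_rfl μ hμ0
      exact ⟨t, ⟨htA, hLI⟩, ν, hν0, hνsum.symm⟩
    · rintro ⟨t, ⟨htA, _⟩, μ, hμ0, rfl⟩
      refine ⟨fun i => if i ∈ t then μ i else 0,
        fun i => by dsimp only; split_ifs; exacts [hμ0 i, le_rfl], ?_⟩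
      have := Finset.sum_subset htA (f := fun i => (if i ∈ t then μ i else 0) • a i)
        (fun i _ hit => by simp [hit])
      dsimp only
      rw [← this]
      exact Finset.sum_congr rfl fun i hi => by simp only [if_pos hi]
  rw [hrw]
  refine Set.Finite.isClosed_biUnion (Set.toFinite _) ?_
  rintro t ⟨htA, hLI⟩
  -- the image description
  let T : ((i : t) → ℝ) →ₗ[ℝ] E :=
    { toFun := fun ν => ∑ i : t, ν i • a i
      map_add' := by intro ν₁ ν₂; simp [add_smul, Finset.sum_add_distrib]
      map_smul' := by intro c ν; simp [smul_smul, Finset.smul_sum] }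
  have hker : LinearMap.ker T = ⊥ := by
    rw [LinearMap.ker_eq_bot']
    intro ν hν
    funext i
    exact Fintype.linearIndependent_iff.1 hLI ν hν i
  obtain ⟨Kt, hKt0, hAL⟩ := T.exists_antilipschitzWith hker
  have hUC : UniformContinuous T := T.toContinuousLinearMap.uniformContinuous
  have himg : {w : E | ∃ μ : ι → ℝ, (∀ i, 0 ≤ μ i) ∧ w = ∑ i ∈ t, μ i • a i}
      = T '' {ν : (i : t) → ℝ | ∀ i, 0 ≤ ν i} := by
    ext w
    simp only [Set.mem_setOf_eq, Set.mem_image]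
    constructor
    · rintro ⟨μ, hμ0, rfl⟩
      refine ⟨fun i => μ i, fun i => hμ0 i, ?_⟩
      exact Finset.sum_coe_sort t (fun i => μ i • a i)
    · rintro ⟨ν, hν0, rfl⟩
      refine ⟨fun i => if h : i ∈ t then ν ⟨i, h⟩ else 0,
        fun i => by dsimp only; split_ifs; exacts [hν0 _, le_rfl], ?_⟩
      rw [← Finset.sum_coe_sort t (fun i => (if h : (i:ι) ∈ t then ν ⟨i, h⟩ else 0) • a i)]
      simp only [Subtype.coe_prop, dif_pos, Finset.coe_mem]
      rfl
  rw [himg]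
  refine (hAL.isClosedEmbedding hUC).isClosedMap _ ?_
  have : {ν : (i : t) → ℝ | ∀ i, 0 ≤ ν i} = ⋂ i : t, {ν : (i : t) → ℝ | 0 ≤ ν i} := by
    ext ν; simp [Set.mem_iInter]
  rw [this]
  exact isClosed_iInter fun i => isClosed_le continuous_const (continuous_apply i)

/-- Hoffman's error bound for systems of linear inequalities, with a constant
independent of the right-hand side. -/
lemma hoffman [FiniteDimensional ℝ E] (a : ι → E) :
    ∃ K : ℝ, 0 < K ∧ ∀ (b : ι → ℝ) (x : E), (∃ z, ∀ i, ⟪a i, z⟫ ≤ b i) →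
      ∀ r : ℝ, 0 ≤ r → (∀ i, ⟪a i, x⟫ ≤ b i + r) →
      ∃ p, (∀ i, ⟪a i, p⟫ ≤ b i) ∧ dist x p ≤ K * r := by
  classical
  obtain ⟨C, hC0, hC⟩ := cone_bound a
  refine ⟨C, hC0, ?_⟩
  rintro b x ⟨z, hz⟩ r hr hx
  set S : Set E := {z | ∀ i, ⟪a i, z⟫ ≤ b i} with hS
  have hconv : Convex ℝ S := by
    intro u hu v hv α β hα hβ hαβ
    intro i
    have : ⟪a i, α • u + β • v⟫ = α * ⟪a i, u⟫ + β * ⟪a i, v⟫ := by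
      rw [inner_add_right, real_inner_smul_right, real_inner_smul_right]
    rw [this]
    calc α * ⟪a i, u⟫ + β * ⟪a i, v⟫ ≤ α * b i + β * b i := by
          gcongr <;> [exact hu i; exact hv i]
      _ = b i := by rw [← add_mul, hαβ, one_mul]
  have hcl : IsClosed S := by
    have : S = ⋂ i, {z | ⟪a i, z⟫ ≤ b i} := by ext z; simp [hS, Set.mem_iInter]
    rw [this]
    exact isClosed_iInter fun i =>
      isClosed_le (Continuous.inner continuous_const continuous_id) continuous_const
  obtain ⟨p, hpS, hproj⟩ :=
    exists_norm_eq_iInf_of_complete_convex ⟨z, show z ∈ S from hz⟩ hcl.isComplete hconv x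
  have hchar : ∀ w ∈ S, ⟪x - p, w - p⟫ ≤ 0 :=
    (norm_eq_iInf_iff_real_inner_le_zero hconv hpS).1 hproj
  set A : Finset ι := Finset.univ.filter (fun i => ⟪a i, p⟫ = b i) with hA
  -- polar condition
  have hpolar : ∀ d : E, (∀ i ∈ A, ⟪a i, d⟫ ≤ 0) → ⟪x - p, d⟫ ≤ 0 := by
    intro d hd
    have hev : ∀ᶠ τ : ℝ in nhdsWithin 0 (Set.Ioi 0), (p + τ • d ∈ S ∧ 0 < τ) := by
      refine Filter.Eventually.and ?_ self_mem_nhdsWithin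
      simp only [hS, Set.mem_setOf_eq]
      rw [Filter.eventually_all]
      intro i
      by_cases hiA : i ∈ A
      · filter_upwards [self_mem_nhdsWithin] with τ hτ
        have hτ0 : 0 < τ := hτ
        have : ⟪a i, p + τ • d⟫ = ⟪a i, p⟫ + τ * ⟪a i, d⟫ := by
          rw [inner_add_right, real_inner_smul_right]
        rw [Set.mem_setOf_eq] at *
        show ⟪a i, p + τ • d⟫ ≤ b i
        rw [this]
        nlinarith [hd i hiA, hpS i]
      · have hlt : ⟪a i, p⟫ < b i := lt_of_le_of_ne (hpS i)
          (by simpa [hA] using hiA)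
        have hcont : Continuous fun τ : ℝ => ⟪a i, p + τ • d⟫ := by
          exact Continuous.inner continuous_const (by continuity)
        have htend : Filter.Tendsto (fun τ : ℝ => ⟪a i, p + τ • d⟫) (nhds 0)
            (nhds ⟪a i, p + (0:ℝ) • d⟫) := hcont.continuousAt
        have : ∀ᶠ τ : ℝ in nhds 0, ⟪a i, p + τ • d⟫ < b i := by
          apply htend.eventually_lt_const
          simpa using hlt
        exact (this.mono fun τ hτ => le_of_lt hτ).filter_mono nhdsWithin_le_nhds
      -- end cases
    obtain ⟨τ, hτS, hτ0⟩ := hev.exists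
    have := hchar _ hτS
    have heq : ⟪x - p, p + τ • d - p⟫ = τ * ⟪x - p, d⟫ := by
      rw [add_sub_cancel_left, real_inner_smul_right]
    rw [heq] at this
    nlinarith
  -- the cone of active constraints
  set CS : Set E := {w : E | ∃ μ : ι → ℝ, (∀ i, 0 ≤ μ i) ∧ w = ∑ i ∈ A, μ i • a i} with hCS
  have hwmem : x - p ∈ CS := by
    by_contra hnot
    set Kcone : ConvexCone ℝ E :=
      { carrier := CS
        smul_mem' := by
          rintro c hc w ⟨μ, hμ0, rfl⟩
          exact ⟨fun i => c * μ i, fun i => mul_nonneg hc.le (hμ0 i),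
            by rw [Finset.smul_sum]; exact Finset.sum_congr rfl fun i _ => by dsimp only; rw [smul_smul]⟩
        add_mem' := by
          rintro w₁ ⟨μ₁, hμ₁, rfl⟩ w₂ ⟨μ₂, hμ₂, rfl⟩
          exact ⟨fun i => μ₁ i + μ₂ i, fun i => add_nonneg (hμ₁ i) (hμ₂ i),
            by rw [← Finset.sum_add_distrib]; exact Finset.sum_congr rfl fun i _ => by dsimp only; rw [add_smul]⟩ } with hKcone
    have hKne : (Kcone : Set E).Nonempty := ⟨0, 0, fun i => le_rfl, by simp⟩
    have hKcl : IsClosed (Kcone : Set E) := cone_isClosed a A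
    obtain ⟨y, hy1, hy2⟩ : ∃ y, (∀ z ∈ Kcone, 0 ≤ ⟪z, y⟫) ∧ ⟪y, x - p⟫ < 0 := by
      obtain ⟨y, hy1, hy2⟩ := ProperCone.hyperplane_separation' (E := E) (x₀ := x - p)
        ({ toSubmodule := Kcone.toPointedCone ⟨0, fun i => le_rfl, by simp⟩,
           isClosed' := hKcl } : ProperCone ℝ E) hnot
      exact ⟨y, fun z hz => hy1 z hz, by rw [real_inner_comm]; exact hy2⟩
    have : ⟪x - p, -y⟫ ≤ 0 := by
      apply hpolar
      intro i hiA
      have hai : a i ∈ Kcone := by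
        refine ⟨fun j => if j = i then 1 else 0, fun j => by dsimp only; split_ifs <;> norm_num, ?_⟩
        rw [Finset.sum_eq_single i (fun j _ hji => by simp [hji]) (fun h => absurd hiA h)]
        simp
      have := hy1 _ hai
      rw [inner_neg_right]
      linarith
    rw [inner_neg_right] at this
    rw [real_inner_comm] at hy2
    linarith
  obtain ⟨μ, hμ0, hμ⟩ := hwmem
  obtain ⟨t, htA, ν, hLI, hν0, hνsum⟩ := cone_caratheodory a A.card A le_rfl μ hμ0
  have hw : x - p = ∑ i ∈ t, ν i • a i := by rw [hμ, ← hνsum]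
  -- now estimate
  have hnormsq : ‖x - p‖ ^ 2 ≤ (∑ i ∈ t, ν i) * r := by
    have h1 : ‖x - p‖ ^ 2 = ⟪x - p, x - p⟫ := (real_inner_self_eq_norm_sq _).symm
    have h2 : ⟪x - p, x - p⟫ = ∑ i ∈ t, ν i * ⟪a i, x - p⟫ := by
      nth_rewrite 2 [hw]
      rw [real_inner_comm, sum_inner]
      exact Finset.sum_congr rfl fun i _ => real_inner_smul_left _ _ _
    have h3 : ∀ i ∈ t, ν i * ⟪a i, x - p⟫ ≤ ν i * r := by
      intro i hi
      have hiA : i ∈ A := htA hi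
      have hact : ⟪a i, p⟫ = b i := by
        simpa [hA] using hiA
      have : ⟪a i, x - p⟫ = ⟪a i, x⟫ - b i := by rw [inner_sub_right, hact]
      rw [this]
      exact mul_le_mul_of_nonneg_left (by linarith [hx i]) (hν0 i)
    calc ‖x - p‖ ^ 2 = ∑ i ∈ t, ν i * ⟪a i, x - p⟫ := by rw [h1, h2]
      _ ≤ ∑ i ∈ t, ν i * r := Finset.sum_le_sum h3
      _ = (∑ i ∈ t, ν i) * r := (Finset.sum_mul _ _ _).symm
  have hsumν : ∑ i ∈ t, ν i ≤ C * ‖x - p‖ := by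
    have := hC t hLI ν hν0
    rwa [← hw] at this
  have hfin : ‖x - p‖ ≤ C * r := by
    rcases eq_or_lt_of_le (norm_nonneg (x - p)) with h0 | h0
    · rw [← h0]; positivity
    · have : ‖x - p‖ ^ 2 ≤ C * ‖x - p‖ * r := le_trans hnormsq
        (mul_le_mul_of_nonneg_right hsumν hr)
      nlinarith
  exact ⟨p, hpS, by rwa [dist_eq_norm]⟩

end Aux

/-- A convex polyhedron: the solution set of finitely many linear inequalities
(equalities being expressible by pairs of inequalities). -/
def IsConvexPolyhedron {E : Type*} [AddCommGroup E] [Module ℝ E] (S : Set E) : Prop :=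
  ∃ (ι : Type) (_ : Fintype ι) (c : ι → (E →ₗ[ℝ] ℝ)) (b : ι → ℝ),
    S = {x | ∀ i, c i x ≤ b i}

/-- A polyhedral set: a finite union of convex polyhedra. -/
def IsPolyhedral {E : Type*} [AddCommGroup E] [Module ℝ E] (S : Set E) : Prop :=
  ∃ (N : ℕ) (P : Fin N → Set E), (∀ i, IsConvexPolyhedron (P i)) ∧ S = ⋃ i, P i

/-- Subregularity of polyhedral mappings: a polyhedral set-valued mapping
`F : ℝⁿ ⇒ ℝᵐ` with closed graph admits a uniform constant `K > 0` such that for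
every `(xb, yb) ∈ graph F` there is `ε > 0` with
`d(x, F⁻¹ yb) ≤ K d(yb, F x)` whenever `‖x − xb‖ < K ε`; in particular `F` is
metrically subregular at every point of its graph with a uniform modulus. -/
theorem polyhedral_subregularity (n m : ℕ)
    (F : EuclideanSpace ℝ (Fin n) → Set (EuclideanSpace ℝ (Fin m)))
    (hpoly : IsPolyhedral
      {p : EuclideanSpace ℝ (Fin n) × EuclideanSpace ℝ (Fin m) | p.2 ∈ F p.1})
    (hclosed : IsClosed
      {p : EuclideanSpace ℝ (Fin n) × EuclideanSpace ℝ (Fin m) | p.2 ∈ F p.1}) :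
    ∃ K : ℝ, 0 < K ∧ ∀ xb : EuclideanSpace ℝ (Fin n), ∀ yb ∈ F xb,
      ∃ ε : ℝ, 0 < ε ∧ ∀ x : EuclideanSpace ℝ (Fin n), dist x xb < K * ε →
        infEdist x {u : EuclideanSpace ℝ (Fin n) | yb ∈ F u} ≤
          ENNReal.ofReal K * infEdist yb (F x) := by
  classical
  obtain ⟨N, P, hPpoly, hgraph⟩ := hpoly
  choose ι ifin c b hP using hPpoly
  -- decompose each functional into its x-part (as a vector) and y-part
  set aa : ∀ i : Fin N, ι i → EuclideanSpace ℝ (Fin n) := fun i j =>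
    (InnerProductSpace.toDual ℝ _).symm
      (LinearMap.toContinuousLinearMap
        ((c i j).comp (LinearMap.inl ℝ (EuclideanSpace ℝ (Fin n)) (EuclideanSpace ℝ (Fin m)))))
    with haa
  set ww : ∀ i : Fin N, ι i → (EuclideanSpace ℝ (Fin m) →L[ℝ] ℝ) := fun i j =>
    LinearMap.toContinuousLinearMap
      ((c i j).comp (LinearMap.inr ℝ (EuclideanSpace ℝ (Fin n)) (EuclideanSpace ℝ (Fin m))))
    with hww
  have key : ∀ (i : Fin N) (j : ι i) (x : EuclideanSpace ℝ (Fin n))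
      (y : EuclideanSpace ℝ (Fin m)), c i j (x, y) = ⟪aa i j, x⟫ + ww i j y := by
    intro i j x y
    have h1 : ⟪aa i j, x⟫ = c i j (x, 0) := by
      rw [haa]
      rw [InnerProductSpace.toDual_symm_apply]
      rfl
    have h2 : ww i j y = c i j (0, y) := rfl
    rw [h1, h2, ← map_add]
    congr 1
    simp
  -- Hoffman constants
  have hhoff : ∀ i : Fin N, ∃ K : ℝ, 0 < K ∧
      ∀ (b' : ι i → ℝ) (x : EuclideanSpace ℝ (Fin n)),
        (∃ z, ∀ j, ⟪aa i j, z⟫ ≤ b' j) →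
        ∀ r : ℝ, 0 ≤ r → (∀ j, ⟪aa i j, x⟫ ≤ b' j + r) →
        ∃ p, (∀ j, ⟪aa i j, p⟫ ≤ b' j) ∧ dist x p ≤ K * r := by
    intro i
    haveI := ifin i
    exact hoffman (aa i)
  choose K hK0 hKspec using hhoff
  set M : Fin N → ℝ := fun i =>
    (((@Finset.univ (ι i) (ifin i)).sup fun j => ‖ww i j‖₊ : NNReal) : ℝ) with hM
  have hM0 : ∀ i, 0 ≤ M i := fun i => NNReal.coe_nonneg _
  have hMle : ∀ (i : Fin N) (j : ι i), ‖ww i j‖ ≤ M i := by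
    intro i j
    have h1 : ‖ww i j‖₊ ≤ (@Finset.univ (ι i) (ifin i)).sup fun j => ‖ww i j‖₊ :=
      Finset.le_sup (f := fun j => ‖ww i j‖₊) (@Finset.mem_univ (ι i) (ifin i) j)
    calc ‖ww i j‖ = ((‖ww i j‖₊ : NNReal) : ℝ) := (coe_nnnorm _).symm
      _ ≤ M i := NNReal.coe_le_coe.2 h1
  set Kbig : ℝ := 1 + ∑ i, max (K i * M i) 0 with hKbig
  have hsumnn : (0:ℝ) ≤ ∑ i, max (K i * M i) 0 :=
    Finset.sum_nonneg fun i _ => le_max_right _ _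
  have hKbig1 : 1 ≤ Kbig := by rw [hKbig]; linarith
  have hKbig0 : 0 < Kbig := by linarith
  have hKbigle : ∀ i, K i * M i ≤ Kbig := by
    intro i
    have h1 : max (K i * M i) 0 ≤ ∑ i, max (K i * M i) 0 :=
      Finset.single_le_sum (f := fun i => max (K i * M i) 0) (fun i _ => le_max_right _ _) (Finset.mem_univ i)
    have := le_max_left (K i * M i) 0
    rw [hKbig]; linarith
  refine ⟨Kbig, hKbig0, ?_⟩
  intro xb yb hyb
  have hxbyb : (xb, yb) ∈ ⋃ i, P i := by
    rw [← hgraph]; exact hyb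
  obtain ⟨i₀, hi₀⟩ := Set.mem_iUnion.1 hxbyb
  haveI : Nonempty (Fin N) := ⟨i₀⟩
  have hPclosed : ∀ i, IsClosed (P i) := by
    intro i
    haveI := ifin i
    rw [hP i]
    have : {p : EuclideanSpace ℝ (Fin n) × EuclideanSpace ℝ (Fin m) | ∀ j, c i j p ≤ b i j}
        = ⋂ j, {p | c i j p ≤ b i j} := by ext p; simp [Set.mem_iInter]
    rw [this]
    exact isClosed_iInter fun j =>
      isClosed_le (LinearMap.continuous_of_finiteDimensional _) continuous_const
  set D : Fin N → Set (EuclideanSpace ℝ (Fin m)) := fun i =>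
    {y | ∃ x' ∈ Metric.closedBall xb 1, (x', y) ∈ P i} with hD
  have hDclosed : ∀ i, IsClosed (D i) := by
    intro i
    apply IsSeqClosed.isClosed
    intro u y hu huy
    choose xs hxs1 hxs2 using hu
    obtain ⟨x', hx'mem, φ, hφmono, hφtend⟩ :=
      (isCompact_closedBall xb 1).tendsto_subseq hxs1
    refine ⟨x', hx'mem, ?_⟩
    have h1 : Filter.Tendsto (fun k => (xs (φ k), u (φ k))) Filter.atTop (nhds (x', y)) :=
      hφtend.prodMk_nhds (huy.comp hφmono.tendsto_atTop)
    exact (hPclosed i).mem_of_tendsto h1 (Filter.Eventually.of_forall fun k => hxs2 (φ k))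
  have hδ : ∀ i : Fin N, ∃ δ : ℝ, 0 < δ ∧
      ((¬ ∃ x', (x', yb) ∈ P i) → ∀ y ∈ D i, δ ≤ dist y yb) := by
    intro i
    by_cases hg : ∃ x', (x', yb) ∈ P i
    · exact ⟨1, one_pos, fun h => absurd hg h⟩
    · have hnD : yb ∉ D i := fun ⟨x', _, hm⟩ => hg ⟨x', hm⟩
      obtain ⟨δ, hδ0, hball⟩ := Metric.isOpen_iff.1 (hDclosed i).isOpen_compl yb hnD
      refine ⟨δ, hδ0, fun _ y hy => ?_⟩
      by_contra hlt
      push_neg at hlt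
      exact hball (Metric.mem_ball.2 hlt) hy
  choose δ hδ0 hδspec using hδ
  set δmin : ℝ := Finset.univ.inf' Finset.univ_nonempty δ with hδmin
  have hδmin0 : 0 < δmin := by
    rw [hδmin, Finset.lt_inf'_iff]
    exact fun i _ => hδ0 i
  set ε : ℝ := min δmin 1 / Kbig with hε
  have hε0 : 0 < ε := div_pos (lt_min hδmin0 one_pos) hKbig0
  have hKε : Kbig * ε = min δmin 1 := by
    rw [hε, mul_comm, div_mul_cancel₀ _ (ne_of_gt hKbig0)]
  refine ⟨ε, hε0, ?_⟩
  intro x hx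
  rw [hKε] at hx
  have hx1 : dist x xb ≤ 1 := hx.le.trans (min_le_right _ _)
  have hxδ : dist x xb < δmin := lt_of_lt_of_le hx (min_le_left _ _)
  have hεδ : Kbig * ε ≤ δmin := by rw [hKε]; exact min_le_left _ _
  -- per-y claim
  have hclaim : ∀ y ∈ F x, infEdist x {u | yb ∈ F u} ≤ ENNReal.ofReal Kbig * edist yb y := by
    intro y hy
    rcases le_or_gt (min δmin 1) (dist yb y) with hfar | hnear
    · calc infEdist x {u | yb ∈ F u} ≤ edist x xb := infEdist_le_edist_of_mem hyb
        _ ≤ ENNReal.ofReal (min δmin 1) := by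
            rw [edist_dist]; exact ENNReal.ofReal_le_ofReal hx.le
        _ ≤ ENNReal.ofReal (Kbig * dist yb y) := by
            apply ENNReal.ofReal_le_ofReal
            calc min δmin 1 ≤ dist yb y := hfar
              _ = 1 * dist yb y := (one_mul _).symm
              _ ≤ Kbig * dist yb y := mul_le_mul_of_nonneg_right hKbig1 dist_nonneg
        _ = ENNReal.ofReal Kbig * edist yb y := by
            rw [edist_dist, ENNReal.ofReal_mul hKbig0.le]
    · have hxy : (x, y) ∈ ⋃ i, P i := by rw [← hgraph]; exact hy
      obtain ⟨i, hi⟩ := Set.mem_iUnion.1 hxy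
      haveI := ifin i
      have hgood : ∃ x', (x', yb) ∈ P i := by
        by_contra hg
        have hyD : y ∈ D i := ⟨x, Metric.mem_closedBall.2 hx1, hi⟩
        have h1 := hδspec i hg y hyD
        have h2 : δmin ≤ δ i := Finset.inf'_le _ (Finset.mem_univ i)
        rw [dist_comm] at h1
        have h3 : dist yb y < δmin := lt_of_lt_of_le hnear (min_le_left _ _)
        linarith
      obtain ⟨x', hx'⟩ := hgood
      simp only [hP i, Set.mem_setOf_eq] at hx' hi
      set b' : ι i → ℝ := fun j => b i j - ww i j yb with hb'
      have hne : ∃ z, ∀ j, ⟪aa i j, z⟫ ≤ b' j := by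
        refine ⟨x', fun j => ?_⟩
        have h1 := hx' j
        rw [key i j x' yb] at h1
        rw [hb']
        simp only
        linarith
      have hres : ∀ j, ⟪aa i j, x⟫ ≤ b' j + M i * dist yb y := by
        intro j
        have h1 := hi j
        rw [key i j x y] at h1
        have h2 : ww i j yb - ww i j y ≤ M i * dist yb y := by
          have h3 : ww i j yb - ww i j y = ww i j (yb - y) := (map_sub _ _ _).symm
          calc ww i j yb - ww i j y = ww i j (yb - y) := h3
            _ ≤ ‖ww i j (yb - y)‖ := le_abs_self _
            _ ≤ ‖ww i j‖ * ‖yb - y‖ := (ww i j).le_opNorm _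
            _ ≤ M i * dist yb y := by
                rw [dist_eq_norm]
                exact mul_le_mul_of_nonneg_right (hMle i j) (norm_nonneg _)
        rw [hb']
        simp only
        linarith
      obtain ⟨p, hp, hdist⟩ := hKspec i b' x hne (M i * dist yb y)
        (mul_nonneg (hM0 i) dist_nonneg) hres
      have hpFinv : p ∈ {u | yb ∈ F u} := by
        have hpP : (p, yb) ∈ P i := by
          rw [hP i]
          intro j
          have h1 := hp j
          rw [hb'] at h1
          simp only at h1
          show c i j (p, yb) ≤ b i j
          rw [key i j p yb]
          linarith
        have h2 : (p, yb) ∈ ⋃ i', P i' := Set.mem_iUnion.2 ⟨i, hpP⟩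
        rw [← hgraph] at h2
        exact h2
      calc infEdist x {u | yb ∈ F u} ≤ edist x p := infEdist_le_edist_of_mem hpFinv
        _ = ENNReal.ofReal (dist x p) := edist_dist _ _
        _ ≤ ENNReal.ofReal (Kbig * dist yb y) := by
            apply ENNReal.ofReal_le_ofReal
            calc dist x p ≤ K i * (M i * dist yb y) := hdist
              _ = (K i * M i) * dist yb y := by ring
              _ ≤ Kbig * dist yb y := mul_le_mul_of_nonneg_right (hKbigle i) dist_nonneg
        _ = ENNReal.ofReal Kbig * edist yb y := by
            rw [edist_dist, ENNReal.ofReal_mul hKbig0.le]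
  -- conclude
  have hKne0 : ENNReal.ofReal Kbig ≠ 0 := (ENNReal.ofReal_pos.2 hKbig0).ne'
  have hKnetop : ENNReal.ofReal Kbig ≠ ⊤ := ENNReal.ofReal_ne_top
  rw [mul_comm, ← ENNReal.div_le_iff_le_mul (Or.inl hKne0) (Or.inl hKnetop)]
  show _ ≤ Metric.infEDist yb (F x)
  rw [Metric.le_infEDist]
  intro y hy
  rw [ENNReal.div_le_iff_le_mul (Or.inl hKne0) (Or.inl hKnetop), mul_comm]
  exact hclaim y hy
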